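/- Define S⁽⁰⁾ = S and S⁽ⁱ⁺¹⁾ = complement of S⁽ⁱ⁾ (with the convention that the complement of ℕ is ℕ). Then for any numerical set S, S⁽ᶜ¹⁽ˢ⁾⁾ = ℕ, and S⁽ⁿ⁾ ≠ ℕ for all n < c₁(S). -/
import Mathlib


open Set

def IsNumericalSet (S : Set ℕ) : Prop := 0 ∈ S ∧ Sᶜ.Finite

def IsNumericalSemigroup (S : Set ℕ) : Prop :=
  IsNumericalSet S ∧ ∀ a ∈ S, ∀ b ∈ S, a + b ∈ S

/-- The associated set `A(S) = {s ∈ S : s + S ⊆ S}`. -/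
def A (S : Set ℕ) : Set ℕ := {s ∈ S | ∀ t ∈ S, s + t ∈ S}

/-- The Frobenius number: the largest gap of `S`. -/
noncomputable def F (S : Set ℕ) : ℕ := sSup Sᶜ

/-- The base: the largest element of `S` below `F S`. -/
noncomputable def B (S : Set ℕ) : ℕ := sSup {s | s ∈ S ∧ s < F S}

/-- The multiplicity: the smallest positive element of `S`. -/
noncomputable def m (S : Set ℕ) : ℕ := sInf {s | s ∈ S ∧ 0 < s}

/-- The complement numerical set (for `S ≠ ℕ`). -/
noncomputable def Stilde (S : Set ℕ) : Set ℕ :=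
  {x | ∃ s ∈ S, s ≤ B S ∧ x = B S - s} ∪ {n | B S ≤ n}

-- The complement operation, with the convention that the complement of ℕ is ℕ.
open Classical in
noncomputable def complOp (S : Set ℕ) : Set ℕ :=
  if S = Set.univ then Set.univ else Stilde S

/-- The genus: the number of gaps. -/
noncomputable def genus (S : Set ℕ) : ℕ := Sᶜ.ncard

/-- The number of boxes with hook length 1. -/
noncomputable def c1 (S : Set ℕ) : ℕ := {n | n ∈ S ∧ n + 1 ∉ S}.ncard

/-- An atom: a positive element not a sum of two positive elements. -/
def IsAtomOf (S : Set ℕ) (a : ℕ) : Prop :=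
  a ∈ S ∧ 0 < a ∧ ¬ ∃ x ∈ S, ∃ y ∈ S, 0 < x ∧ 0 < y ∧ a = x + y

/-- A small atom: an atom smaller than the Frobenius number. -/
def IsSmallAtom (S : Set ℕ) (a : ℕ) : Prop := IsAtomOf S a ∧ a < F S

/-- The embedding dimension: the number of atoms. -/
noncomputable def numAtoms (S : Set ℕ) : ℕ := {a | IsAtomOf S a}.ncard

/-- Maximal embedding dimension. -/
def MaxED (S : Set ℕ) : Prop := numAtoms S = m S


section Aux

variable {S : Set ℕ}

lemma F_spec (hS : IsNumericalSet S) (hne : S ≠ Set.univ) :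
    F S ∉ S ∧ ∀ n, n ∉ S → n ≤ F S := by
  have hne' : Sᶜ.Nonempty := Set.nonempty_compl.mpr hne
  have h1 : F S ∈ Sᶜ := Nat.sSup_mem hne' hS.2.bddAbove
  exact ⟨h1, fun n hn => le_csSup hS.2.bddAbove hn⟩

lemma B_spec (hS : IsNumericalSet S) (hne : S ≠ Set.univ) :
    (B S ∈ S ∧ B S < F S) ∧ ∀ s ∈ S, s < F S → s ≤ B S := by
  obtain ⟨hF, hFmax⟩ := F_spec hS hne
  have hFpos : 0 < F S := by
    rcases Nat.eq_zero_or_pos (F S) with h | h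
    · exact absurd (h ▸ hS.1) hF
    · exact h
  have h0 : (0 : ℕ) ∈ {s | s ∈ S ∧ s < F S} := ⟨hS.1, hFpos⟩
  have hbdd : BddAbove {s | s ∈ S ∧ s < F S} := ⟨F S, fun x hx => hx.2.le⟩
  exact ⟨Nat.sSup_mem ⟨0, h0⟩ hbdd, fun s hs hsF => le_csSup hbdd ⟨hs, hsF⟩⟩

lemma mem_Stilde_iff (x : ℕ) : x ∈ Stilde S ↔ (B S ≤ x ∨ B S - x ∈ S) := by
  constructor
  · rintro (⟨s, hs, hsB, rfl⟩ | h)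
    · right
      have : B S - (B S - s) = s := by omega
      rwa [this]
    · left; exact h
  · rintro (h | h)
    · right; exact h
    · rcases le_or_gt (B S) x with hx | hx
      · right; exact hx
      · left; exact ⟨B S - x, h, by omega, by omega⟩

lemma c1_univ : c1 (Set.univ : Set ℕ) = 0 := by
  unfold c1
  convert Set.ncard_empty ℕ using 2
  ext n; simp

lemma key (hS : IsNumericalSet S) (hne : S ≠ Set.univ) :
    IsNumericalSet (Stilde S) ∧ c1 (Stilde S) + 1 = c1 S := by
  classical
  obtain ⟨hF, hFmax⟩ := F_spec hS hne
  obtain ⟨⟨hBmem, hBF⟩, hBmax⟩ := B_spec hS hne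
  have hgt : ∀ n, F S < n → n ∈ S := by
    intro n hn
    by_contra h
    exact absurd (hFmax n h) (by omega)
  -- no elements of S strictly between B S and F S
  have hno : ∀ s ∈ S, B S < s → F S < s := by
    intro s hs hBs
    rcases lt_trichotomy s (F S) with h | h | h
    · exact absurd (hBmax s hs h) (by omega)
    · exact absurd (h ▸ hs) hF
    · exact h
  -- Stilde S is numerical
  have hT0 : (0 : ℕ) ∈ Stilde S := by
    rw [mem_Stilde_iff]
    right
    simpa using hBmem
  have hTfin : (Stilde S)ᶜ.Finite := by
    apply Set.Finite.subset (Set.finite_Iio (B S))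
    intro x hx
    simp only [Set.mem_compl_iff, mem_Stilde_iff] at hx
    push_neg at hx
    simpa using hx.1
  refine ⟨⟨hT0, hTfin⟩, ?_⟩
  -- counting: descents and ascents of S in range N
  set N := F S + 2 with hN
  set f : ℕ → ℤ := fun n => if n ∈ S then 1 else 0 with hf
  have tel : ∑ i ∈ Finset.range N, (f i - f (i + 1)) = f 0 - f N :=
    Finset.sum_range_sub' f N
  have hf0 : f 0 = 1 := by simp [hf, hS.1]
  have hfN : f N = 1 := by simp [hf, hgt N (by omega)]
  have each : ∀ i, f i - f (i + 1) =
      (if i ∈ S ∧ i + 1 ∉ S then (1 : ℤ) else 0)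
      - (if i ∉ S ∧ i + 1 ∈ S then (1 : ℤ) else 0) := by
    intro i
    by_cases h1 : i ∈ S <;> by_cases h2 : i + 1 ∈ S <;> simp [hf, h1, h2]
  have tel2 : ∑ i ∈ Finset.range N, ((if i ∈ S ∧ i + 1 ∉ S then (1 : ℤ) else 0)
      - (if i ∉ S ∧ i + 1 ∈ S then (1 : ℤ) else 0)) = 0 := by
    rw [← Finset.sum_congr rfl (fun i _ => (each i))]
    rw [tel, hf0, hfN]; ring
  rw [Finset.sum_sub_distrib] at tel2
  have hsum := sub_eq_zero.mp tel2
  rw [Finset.sum_boole, Finset.sum_boole] at hsum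
  have hcards : ((Finset.range N).filter (fun i => i ∈ S ∧ i + 1 ∉ S)).card
      = ((Finset.range N).filter (fun i => i ∉ S ∧ i + 1 ∈ S)).card := by
    exact_mod_cast hsum
  -- c1 S equals the descent count
  have hc1S : c1 S = ((Finset.range N).filter (fun i => i ∈ S ∧ i + 1 ∉ S)).card := by
    unfold c1
    rw [← Set.ncard_coe_finset]
    congr 1
    ext n
    simp only [Finset.coe_filter, Finset.mem_range, Set.mem_setOf_eq]
    constructor
    · rintro ⟨h1, h2⟩
      exact ⟨by have := hFmax _ h2; omega, h1, h2⟩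
    · rintro ⟨_, h⟩; exact h
  -- ascent set
  set Aset : Set ℕ := {n | n ∉ S ∧ n + 1 ∈ S} with hAset
  have hAsetcard : Aset.ncard = ((Finset.range N).filter (fun i => i ∉ S ∧ i + 1 ∈ S)).card := by
    rw [← Set.ncard_coe_finset]
    congr 1
    ext n
    simp only [Finset.coe_filter, Finset.mem_range, Set.mem_setOf_eq, hAset]
    constructor
    · rintro ⟨h1, h2⟩
      exact ⟨by have := hFmax _ h1; omega, h1, h2⟩
    · rintro ⟨_, h⟩; exact h
  -- split ascents: Aset = A' ∪ {F S}
  set A' : Set ℕ := {n | n < B S ∧ n ∉ S ∧ n + 1 ∈ S} with hA'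
  have hA'fin : A'.Finite := (Set.finite_Iio (B S)).subset (fun n hn => hn.1)
  have hsplit : Aset = A' ∪ {F S} := by
    ext n
    simp only [hAset, hA', Set.mem_setOf_eq, Set.mem_union, Set.mem_singleton_iff]
    constructor
    · rintro ⟨h1, h2⟩
      rcases lt_or_ge n (B S) with h | h
      · exact Or.inl ⟨h, h1, h2⟩
      · right
        have hnB : n ≠ B S := fun he => h1 (he ▸ hBmem)
        have : F S < n + 1 := hno _ h2 (by omega)
        have := hFmax _ h1
        omega
    · rintro (⟨_, h⟩ | rfl)
      · exact h
      · exact ⟨hF, hgt _ (by omega)⟩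
  have hFnotA' : F S ∉ A' := fun h => absurd h.1 (by omega)
  have hAcard : Aset.ncard = A'.ncard + 1 := by
    rw [hsplit, Set.ncard_union_eq (by simp [Set.disjoint_singleton_right, hFnotA'])
      hA'fin (Set.finite_singleton _), Set.ncard_singleton]
  -- descents of Stilde S are in bijection with A'
  have hDT : {x | x ∈ Stilde S ∧ x + 1 ∉ Stilde S} = (fun n => B S - 1 - n) '' A' := by
    ext x
    simp only [Set.mem_setOf_eq, Set.mem_image, hA']
    constructor
    · rintro ⟨hx1, hx2⟩
      rw [mem_Stilde_iff] at hx1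
      rw [mem_Stilde_iff] at hx2
      push_neg at hx2
      obtain ⟨hlt, hns⟩ := hx2
      have hxB : x + 1 < B S := by omega
      have hBx : B S - x ∈ S := by
        rcases hx1 with h | h
        · omega
        · exact h
      refine ⟨B S - (x + 1), ⟨by omega, hns, ?_⟩, by omega⟩
      have : B S - (x + 1) + 1 = B S - x := by omega
      rw [this]; exact hBx
    · rintro ⟨n, ⟨hnB, hnS, hn1S⟩, rfl⟩
      have hn0 : 0 < n := by
        rcases Nat.eq_zero_or_pos n with h | h
        · exact absurd (h ▸ hS.1) (h ▸ hnS)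
        · exact h
      constructor
      · rw [mem_Stilde_iff]
        right
        have : B S - (B S - 1 - n) = n + 1 := by omega
        rw [this]; exact hn1S
      · rw [mem_Stilde_iff]
        push_neg
        constructor
        · omega
        · have : B S - (B S - 1 - n + 1) = n := by omega
          rw [this]; exact hnS
  have hinj : Set.InjOn (fun n => B S - 1 - n) A' := by
    intro a ha b hb hab
    simp only [hA', Set.mem_setOf_eq] at ha hb
    simp only at hab
    omega
  have hc1T : c1 (Stilde S) = A'.ncard := by
    unfold c1
    rw [hDT, Set.ncard_image_of_injOn hinj]
  omega

lemma main_aux : ∀ k : ℕ, ∀ S : Set ℕ, IsNumericalSet S → c1 S = k →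
    complOp^[k] S = Set.univ ∧ ∀ n < k, complOp^[n] S ≠ Set.univ := by
  intro k
  induction k with
  | zero =>
    intro S hS hc
    have hSuniv : S = Set.univ := by
      by_contra hne
      have := (key hS hne).2
      omega
    exact ⟨hSuniv, by omega⟩
  | succ k ih =>
    intro S hS hc
    have hne : S ≠ Set.univ := by
      intro h
      rw [h, c1_univ] at hc
      omega
    obtain ⟨hT, hcT⟩ := key hS hne
    have hstep : complOp S = Stilde S := if_neg hne
    have hcT' : c1 (Stilde S) = k := by omega
    obtain ⟨ih1, ih2⟩ := ih (Stilde S) hT hcT'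
    constructor
    · rw [Function.iterate_succ_apply, hstep, ih1]
    · intro n hn
      match n with
      | 0 => simpa using hne
      | n + 1 =>
        rw [Function.iterate_succ_apply, hstep]
        exact ih2 n (by omega)

end Aux

theorem iterated_complement_reaches_nat (S : Set ℕ) (hS : IsNumericalSet S) :
    complOp^[c1 S] S = Set.univ ∧ ∀ n < c1 S, complOp^[n] S ≠ Set.univ :=
  main_aux (c1 S) S hS rfl
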